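/- arXiv:2604.13022 — 3 statements merged into one kernel-verified Lean document; each statement's English description precedes it below -/
import Mathlib

section
/- Let d ≥ 1, let V : ℝ^d → ℝ be continuously differentiable with V(x) > 0 for all x, and let Θ, Π : ℝ → ℝ^d be differentiable curves such that Π_t ≠ 0 for all t and, for all t, Θ'(t) = 2Π_t/‖Π_t‖² and Π'(t) = −∇V(Θ_t)/V(Θ_t). Then the energy is conserved: for all t ≥ 0, ‖Π_t‖² · V(Θ_t) = ‖Π_0‖² · V(Θ_0). -/
/-- Energy conservation for the Energy Conserving Descent (ECD) dynamics in ℝ^d: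
if `Θ' = 2Π/‖Π‖²` and `Π' = −∇V(Θ)/V(Θ)` with `V` a positive C¹ potential and the
momentum `Π` (here `P`) never vanishing, then `‖Π_t‖² V(Θ_t)` is constant. -/
theorem ecd_energy_conserved
    (d : ℕ) (hd : 1 ≤ d)
    (V : EuclideanSpace ℝ (Fin d) → ℝ)
    (hV : ContDiff ℝ 1 V)
    (hVpos : ∀ x, 0 < V x)
    (Θ P : ℝ → EuclideanSpace ℝ (Fin d))
    (hPne : ∀ t, P t ≠ 0)
    (hΘ : ∀ t, HasDerivAt Θ ((2 / ‖P t‖ ^ 2) • P t) t)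
    (hP : ∀ t, HasDerivAt P (-(1 / V (Θ t)) • gradient V (Θ t)) t) :
    ∀ t, 0 ≤ t → ‖P t‖ ^ 2 * V (Θ t) = ‖P 0‖ ^ 2 * V (Θ 0) := by
  set f : ℝ → ℝ := fun t => ‖P t‖ ^ 2 * V (Θ t) with hf
  have key : ∀ t, HasDerivAt f 0 t := by
    intro t
    -- derivative of ‖P t‖²
    have hinner : HasDerivAt (fun t => (inner ℝ (P t) (P t) : ℝ))
        (inner ℝ (P t) (-(1 / V (Θ t)) • gradient V (Θ t))
          + inner ℝ (-(1 / V (Θ t)) • gradient V (Θ t)) (P t)) t :=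
      (hP t).inner ℝ (hP t)
    have hnorm : HasDerivAt (fun t => ‖P t‖ ^ 2)
        (-(2 / V (Θ t)) * inner ℝ (gradient V (Θ t)) (P t)) t := by
      have h1 : (fun t => ‖P t‖ ^ 2) = fun t => (inner ℝ (P t) (P t) : ℝ) := by
        funext s; rw [real_inner_self_eq_norm_sq]
      rw [h1]
      convert hinner using 1
      rw [real_inner_smul_left, real_inner_smul_right,
        real_inner_comm (P t) (gradient V (Θ t))]
      ring
    -- derivative of V ∘ Θ
    have hgrad : HasGradientAt V (gradient V (Θ t)) (Θ t) :=
      (hV.differentiable one_ne_zero (Θ t)).hasGradientAt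
    have hVΘ : HasDerivAt (fun t => V (Θ t))
        ((2 / ‖P t‖ ^ 2) * inner ℝ (gradient V (Θ t)) (P t)) t := by
      have := hgrad.hasFDerivAt.comp_hasDerivAt t (hΘ t)
      refine this.congr_deriv ?_
      simp [InnerProductSpace.toDual_apply_apply, real_inner_smul_right]
    have := hnorm.mul hVΘ
    refine this.congr_deriv ?_
    have hVne : V (Θ t) ≠ 0 := (hVpos (Θ t)).ne'
    have hPn : ‖P t‖ ^ 2 ≠ 0 := pow_ne_zero 2 (norm_ne_zero_iff.mpr (hPne t))
    field_simp
    rw [div_self (norm_ne_zero_iff.mpr (hPne t))]; ring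
  have hdiff : Differentiable ℝ f := fun t => (key t).differentiableAt
  have hderiv : ∀ t, deriv f t = 0 := fun t => (key t).deriv
  intro t _
  exact is_const_of_deriv_eq_zero hdiff hderiv t 0
end

section
/- Let λ > 0, L > 0, and let w : [0,L] → ℝ be continuous. Suppose G₊, G₋ : [0,L] → ℝ are differentiable and satisfy G₊'(x) + λ(G₋(x) − G₊(x)) = −w(x) and −G₋'(x) + λ(G₊(x) − G₋(x)) = −w(x) for all x ∈ [0,L], with boundary conditions G₋(0) = 0 and G₊(L) = 0. Then G₊(0) = (1/(1+λL)) ∫₀^L (1 + 2λ(L−x)) w(x) dx and G₋(L) = (1/(1+λL)) ∫₀^L (1 + 2λx) w(x) dx. -/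
open intervalIntegral

/-- The Poisson boundary value problem for the telegraph generator on `[0,L]`:
`G₊' + λ(G₋ − G₊) = −w`, `−G₋' + λ(G₊ − G₋) = −w` with `G₋(0) = 0`, `G₊(L) = 0`
gives `G₊(0) = q∫₀^L (1+2λ(L−x))w(x)dx` and `G₋(L) = q∫₀^L (1+2λx)w(x)dx`,
where `q = 1/(1+λL)`. -/
theorem telegraph_expected_cost
    (lam L : ℝ) (hlam : 0 < lam) (hL : 0 < L)
    (w : ℝ → ℝ) (hw : ContinuousOn w (Set.Icc 0 L))
    (Gp Gm : ℝ → ℝ)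
    (hGp : ∀ x ∈ Set.Icc 0 L,
      HasDerivWithinAt Gp (-w x - lam * (Gm x - Gp x)) (Set.Icc 0 L) x)
    (hGm : ∀ x ∈ Set.Icc 0 L,
      HasDerivWithinAt Gm (w x + lam * (Gp x - Gm x)) (Set.Icc 0 L) x)
    (hb0 : Gm 0 = 0) (hbL : Gp L = 0) :
    Gp 0 = (1 / (1 + lam * L)) * ∫ x in (0:ℝ)..L, (1 + 2 * lam * (L - x)) * w x ∧
    Gm L = (1 / (1 + lam * L)) * ∫ x in (0:ℝ)..L, (1 + 2 * lam * x) * w x := by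
  have h0L : (0:ℝ) ≤ L := hL.le
  have huIcc : Set.uIcc (0:ℝ) L = Set.Icc 0 L := Set.uIcc_of_le h0L
  have hGpc : ContinuousOn Gp (Set.Icc 0 L) := fun x hx => (hGp x hx).continuousWithinAt
  have hGmc : ContinuousOn Gm (Set.Icc 0 L) := fun x hx => (hGm x hx).continuousWithinAt
  have integ : ∀ f : ℝ → ℝ, ContinuousOn f (Set.Icc 0 L) →
      IntervalIntegrable f MeasureTheory.volume 0 L := by
    intro f hf
    exact (huIcc ▸ hf : ContinuousOn f (Set.uIcc 0 L)).intervalIntegrable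
  -- generic FTC helper
  have key : ∀ (f f' : ℝ → ℝ),
      (∀ x ∈ Set.Icc 0 L, HasDerivWithinAt f (f' x) (Set.Icc 0 L) x) →
      ContinuousOn f' (Set.Icc 0 L) →
      ∫ x in (0:ℝ)..L, f' x = f L - f 0 := by
    intro f f' hf hf'
    apply integral_eq_sub_of_hasDeriv_right_of_le h0L
      (fun x hx => (hf x hx).continuousWithinAt)
    · intro x hx
      exact (hf x (Set.Ioo_subset_Icc_self hx)).mono_of_mem_nhdsWithin
        (Icc_mem_nhdsGT_of_mem ⟨hx.1.le, hx.2⟩)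
    · exact integ f' hf'
  set I1 := ∫ x in (0:ℝ)..L, w x with hI1
  set I2 := ∫ x in (0:ℝ)..L, (L - x) * w x with hI2
  set J := ∫ x in (0:ℝ)..L, (Gp x - Gm x) with hJ
  have hwI : IntervalIntegrable w MeasureTheory.volume 0 L := integ w hw
  have hI2I : IntervalIntegrable (fun x => (L - x) * w x) MeasureTheory.volume 0 L :=
    integ _ ((continuousOn_const.sub continuousOn_id).mul hw)
  -- eq A : D' = -2 w
  have eqA : ∫ x in (0:ℝ)..L, (-2) * w x = (Gp L - Gm L) - (Gp 0 - Gm 0) := by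
    apply key (fun x => Gp x - Gm x)
    · intro x hx
      have h := (hGp x hx).sub (hGm x hx)
      exact h.congr_deriv (by ring)
    · exact continuousOn_const.mul hw
  -- eq B : ((L-x) D)' = -D - 2(L-x) w
  have eqB : ∫ x in (0:ℝ)..L, (-(Gp x - Gm x) + (L - x) * (-2 * w x))
      = (L - L) * (Gp L - Gm L) - (L - 0) * (Gp 0 - Gm 0) := by
    apply key (fun x => (L - x) * (Gp x - Gm x))
    · intro x hx
      have hlin : HasDerivWithinAt (fun y : ℝ => L - y) (-1) (Set.Icc 0 L) x :=
        (hasDerivWithinAt_id x _).const_sub L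
      have h := hlin.mul ((hGp x hx).sub (hGm x hx))
      exact h.congr_deriv (by simp only [Pi.sub_apply]; ring)
    · exact ((hGpc.sub hGmc).neg).add
        ((continuousOn_const.sub continuousOn_id).mul (continuousOn_const.mul hw))
  -- eq C : S' = 2 lam D
  have eqC : ∫ x in (0:ℝ)..L, (2 * lam) * (Gp x - Gm x) = (Gp L + Gm L) - (Gp 0 + Gm 0) := by
    apply key (fun x => Gp x + Gm x)
    · intro x hx
      have h := (hGp x hx).add (hGm x hx)
      exact h.congr_deriv (by ring)
    · exact continuousOn_const.mul (hGpc.sub hGmc)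
  -- simplify the LHS of each
  have eA : (-2) * I1 = - Gm L - Gp 0 := by
    rw [intervalIntegral.integral_const_mul, ← hI1] at eqA
    rw [eqA, hb0, hbL]; ring
  have eB : -J + (-2) * I2 = - L * Gp 0 := by
    have h2 : ∫ x in (0:ℝ)..L, (-(Gp x - Gm x) + (L - x) * (-2 * w x))
        = (∫ x in (0:ℝ)..L, -(Gp x - Gm x)) + ∫ x in (0:ℝ)..L, (L - x) * (-2 * w x) := by
      apply intervalIntegral.integral_add
      · exact integ _ ((hGpc.sub hGmc).neg)
      · exact integ _ ((continuousOn_const.sub continuousOn_id).mul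
          (continuousOn_const.mul hw))
    rw [h2] at eqB
    have h3 : (∫ x in (0:ℝ)..L, -(Gp x - Gm x)) = -J := by
      rw [hJ, ← intervalIntegral.integral_neg]
    have h4 : (∫ x in (0:ℝ)..L, (L - x) * (-2 * w x)) = (-2) * I2 := by
      rw [hI2, ← intervalIntegral.integral_const_mul]
      apply intervalIntegral.integral_congr
      intro x hx; ring
    rw [h3, h4] at eqB
    rw [eqB, hb0, hbL]; ring
  have eC : (2 * lam) * J = Gm L - Gp 0 := by
    rw [intervalIntegral.integral_const_mul, ← hJ] at eqC
    rw [eqC, hb0, hbL]; ring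
  -- now express target integrals
  have hT1 : (∫ x in (0:ℝ)..L, (1 + 2 * lam * (L - x)) * w x) = I1 + 2 * lam * I2 := by
    have h2 : (∫ x in (0:ℝ)..L, (1 + 2 * lam * (L - x)) * w x)
        = (∫ x in (0:ℝ)..L, w x) + ∫ x in (0:ℝ)..L, (2 * lam) * ((L - x) * w x) := by
      rw [← intervalIntegral.integral_add hwI (hI2I.const_mul _)]
      apply intervalIntegral.integral_congr
      intro x hx; ring
    rw [h2, intervalIntegral.integral_const_mul, ← hI1, ← hI2]
  have hT2 : (∫ x in (0:ℝ)..L, (1 + 2 * lam * x) * w x)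
      = (1 + 2 * lam * L) * I1 - 2 * lam * I2 := by
    have h2 : (∫ x in (0:ℝ)..L, (1 + 2 * lam * x) * w x)
        = (∫ x in (0:ℝ)..L, (1 + 2 * lam * L) * w x)
          + ∫ x in (0:ℝ)..L, (-(2 * lam)) * ((L - x) * w x) := by
      rw [← intervalIntegral.integral_add (hwI.const_mul _) (hI2I.const_mul _)]
      apply intervalIntegral.integral_congr
      intro x hx; ring
    rw [h2, intervalIntegral.integral_const_mul, intervalIntegral.integral_const_mul,
      ← hI1, ← hI2]
    ring
  have hpos : (0:ℝ) < 1 + lam * L := by positivity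
  rw [hT1, hT2]
  constructor
  · field_simp
    nlinarith [eA, eB, eC]
  · field_simp
    nlinarith [eA, eB, eC]
end

section
/- There exist constants C ≥ c > 0 and δ₀ ∈ (0,1) such that for all 0 < δ < δ₀: c·log(1/δ) ≤ ∫₁^∞ du/√(δ + (1−u²)²) ≤ C·log(1/δ). -/
open MeasureTheory

lemma aux_log_integral (s k : ℝ) (hs : 0 < s) (hk : 0 < k) :
    ∫ x in (1:ℝ)..2, (s + k * (x - 1))⁻¹ = (Real.log (s + k) - Real.log s) / k := by
  have hpos : ∀ x ∈ Set.uIcc (1:ℝ) 2, 0 < s + k * (x - 1) := by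
    intro x hx
    rw [Set.uIcc_of_le one_le_two] at hx
    nlinarith [hx.1]
  have hderiv : ∀ x ∈ Set.uIcc (1:ℝ) 2,
      HasDerivAt (fun x => Real.log (s + k * (x - 1)) / k) ((s + k * (x - 1))⁻¹) x := by
    intro x hx
    have hp := hpos x hx
    have hd : HasDerivAt (fun x : ℝ => s + k * (x - 1)) k x := by
      simpa using (((hasDerivAt_id x).sub_const 1).const_mul k).const_add s
    have := (hd.log hp.ne').div_const k
    rw [div_right_comm, div_self hk.ne', one_div] at this
    exact this
  have hcont : ContinuousOn (fun x : ℝ => (s + k * (x - 1))⁻¹) (Set.uIcc (1:ℝ) 2) := by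
    apply ContinuousOn.inv₀ (by fun_prop)
    intro x hx; exact (hpos x hx).ne'
  rw [intervalIntegral.integral_eq_sub_of_hasDerivAt hderiv hcont.intervalIntegrable]
  norm_num
  ring

/-- Small-`δ` asymptotics of the tail momentum integral for the symmetric
double well: `∫₁^∞ du/√(δ + (1−u²)²) ≍ log(1/δ)` as `δ → 0⁺`. -/
theorem tail_integral_small_error_asymptotics :
    ∃ c C δ₀ : ℝ, 0 < c ∧ c ≤ C ∧ 0 < δ₀ ∧ δ₀ < 1 ∧
      ∀ δ : ℝ, 0 < δ → δ < δ₀ →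
        c * Real.log (1 / δ) ≤
            (∫ u in Set.Ioi (1:ℝ), 1 / Real.sqrt (δ + (1 - u ^ 2) ^ 2)) ∧
          (∫ u in Set.Ioi (1:ℝ), 1 / Real.sqrt (δ + (1 - u ^ 2) ^ 2)) ≤
            C * Real.log (1 / δ) := by
  refine ⟨1/6, 4, 1/3, by norm_num, by norm_num, by norm_num, by norm_num, ?_⟩
  intro δ hδ hδ3
  set s := Real.sqrt δ with hsdef
  have hs : 0 < s := Real.sqrt_pos.2 hδ
  have hss : s ^ 2 = δ := Real.sq_sqrt hδ.le
  have hs1 : s < 1 := by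
    nlinarith [hss]
  set f : ℝ → ℝ := fun u => 1 / Real.sqrt (δ + (1 - u ^ 2) ^ 2) with hfdef
  have hden : ∀ u : ℝ, 0 < δ + (1 - u ^ 2) ^ 2 := fun u => by positivity
  have hcontf : Continuous f := by
    apply Continuous.div continuous_const (by fun_prop)
    intro u; exact (Real.sqrt_pos.2 (hden u)).ne'
  have hfnn : ∀ u : ℝ, 0 ≤ f u := fun u => by positivity
  -- integrability on (2, ∞)
  have hgint : IntegrableOn (fun u : ℝ => (4/3 : ℝ) * u ^ (-2 : ℝ)) (Set.Ioi 2) := by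
    exact (integrableOn_Ioi_rpow_of_lt (by norm_num) (by norm_num : (0:ℝ) < 2)).const_mul _
  have hbound2 : ∀ u ∈ Set.Ioi (2:ℝ), f u ≤ (4/3 : ℝ) * u ^ (-2 : ℝ) := by
    intro u hu
    have hu2 : (2:ℝ) < u := hu
    have hu0 : (0:ℝ) < u := by linarith
    have h3 : (3/4 : ℝ) * u ^ 2 ≤ Real.sqrt (δ + (1 - u ^ 2) ^ 2) := by
      calc (3/4 : ℝ) * u ^ 2 ≤ u ^ 2 - 1 := by nlinarith
        _ = Real.sqrt ((u ^ 2 - 1) ^ 2) := (Real.sqrt_sq (by nlinarith)).symm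
        _ ≤ Real.sqrt (δ + (1 - u ^ 2) ^ 2) := Real.sqrt_le_sqrt (by nlinarith)
    have hrw : (4/3 : ℝ) * u ^ (-2 : ℝ) = 1 / ((3/4 : ℝ) * u ^ 2) := by
      rw [show (-2 : ℝ) = -(2:ℕ) by norm_num, Real.rpow_neg hu0.le, Real.rpow_natCast]
      field_simp
    rw [hrw]
    exact one_div_le_one_div_of_le (by positivity) h3
  have hint2 : IntegrableOn f (Set.Ioi 2) := by
    apply Integrable.mono' hgint (hcontf.aestronglyMeasurable.restrict)
    filter_upwards [ae_restrict_mem measurableSet_Ioi] with u hu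
    rw [Real.norm_of_nonneg (hfnn u)]
    exact hbound2 u hu
  have hintIoc : IntegrableOn f (Set.Ioc 1 2) := hcontf.integrableOn_Ioc
  have hunion : Set.Ioc (1:ℝ) 2 ∪ Set.Ioi 2 = Set.Ioi 1 :=
    Set.Ioc_union_Ioi_eq_Ioi one_le_two
  have hdisj : Disjoint (Set.Ioc (1:ℝ) 2) (Set.Ioi 2) := by
    rw [Set.disjoint_left]
    rintro x ⟨_, h2⟩ h3
    exact absurd h3 (not_lt.2 h2)
  have hint : IntegrableOn f (Set.Ioi 1) := by
    rw [← hunion]; exact hintIoc.union hint2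
  have hsplit : (∫ u in Set.Ioi (1:ℝ), f u)
      = (∫ u in Set.Ioc (1:ℝ) 2, f u) + ∫ u in Set.Ioi (2:ℝ), f u := by
    rw [← hunion]
    exact setIntegral_union hdisj measurableSet_Ioi hintIoc hint2
  have hIoc_eq : (∫ u in Set.Ioc (1:ℝ) 2, f u) = ∫ u in (1:ℝ)..2, f u :=
    (intervalIntegral.integral_of_le one_le_two).symm
  have hlogδ : Real.log (1 / δ) = -2 * Real.log s := by
    rw [one_div, Real.log_inv, ← hss, Real.log_pow]
    push_cast; ring
  have hL1 : 1 < Real.log (1 / δ) := by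
    rw [← Real.exp_lt_exp, Real.exp_log (by positivity)]
    calc Real.exp 1 < 2.7182818286 := Real.exp_one_lt_d9
      _ ≤ 3 := by norm_num
      _ < 1 / δ := by rw [lt_div_iff₀ hδ]; linarith
  constructor
  · -- lower bound
    have hmono : (∫ u in Set.Ioc (1:ℝ) 2, f u) ≤ ∫ u in Set.Ioi (1:ℝ), f u := by
      apply setIntegral_mono_set hint
      · exact Filter.Eventually.of_forall fun u => hfnn u
      · exact HasSubset.Subset.eventuallyLE Set.Ioc_subset_Ioi_self
    have hptlow : ∀ x ∈ Set.Icc (1:ℝ) 2, (s + 3 * (x - 1))⁻¹ ≤ f x := by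
      intro x hx
      obtain ⟨hx1, hx2⟩ := hx
      have hsq : Real.sqrt (δ + (1 - x ^ 2) ^ 2) ≤ s + 3 * (x - 1) := by
        rw [show s + 3 * (x - 1) = Real.sqrt ((s + 3 * (x - 1)) ^ 2) from
          (Real.sqrt_sq (by nlinarith)).symm]
        apply Real.sqrt_le_sqrt
        nlinarith [mul_nonneg hs.le (sub_nonneg.2 hx1),
          mul_nonneg (mul_nonneg (sq_nonneg (x - 1)) (by linarith : (0:ℝ) ≤ 2 - x))
            (by linarith : (0:ℝ) ≤ 4 + x)]
      rw [inv_eq_one_div]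
      exact one_div_le_one_div_of_le (Real.sqrt_pos.2 (hden x)) hsq
    have hgII : IntervalIntegrable (fun x : ℝ => (s + 3 * (x - 1))⁻¹) volume 1 2 := by
      apply ContinuousOn.intervalIntegrable
      apply ContinuousOn.inv₀ (by fun_prop)
      intro x hx
      rw [Set.uIcc_of_le one_le_two] at hx
      nlinarith [hx.1]
    have hcmp : (∫ x in (1:ℝ)..2, (s + 3 * (x - 1))⁻¹) ≤ ∫ x in (1:ℝ)..2, f x :=
      intervalIntegral.integral_mono_on one_le_two hgII (hcontf.intervalIntegrable 1 2) hptlow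
    have hval := aux_log_integral s 3 hs (by norm_num)
    have hlog3 : 0 ≤ Real.log (s + 3) := Real.log_nonneg (by linarith)
    calc (1/6 : ℝ) * Real.log (1/δ) = (0 - Real.log s) / 3 + (-2 * Real.log s) / 6
          - (- Real.log s) / 3 := by rw [hlogδ]; ring
      _ ≤ (Real.log (s + 3) - Real.log s) / 3 := by linarith
      _ = ∫ x in (1:ℝ)..2, (s + 3 * (x - 1))⁻¹ := hval.symm
      _ ≤ ∫ x in (1:ℝ)..2, f x := hcmp
      _ = ∫ u in Set.Ioc (1:ℝ) 2, f u := hIoc_eq.symm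
      _ ≤ ∫ u in Set.Ioi (1:ℝ), f u := hmono
  · -- upper bound
    have hpthigh : ∀ x ∈ Set.Icc (1:ℝ) 2, f x ≤ 2 * (s + 1 * (x - 1))⁻¹ := by
      intro x hx
      obtain ⟨hx1, hx2⟩ := hx
      have hsq : (s + (x - 1)) / 2 ≤ Real.sqrt (δ + (1 - x ^ 2) ^ 2) := by
        rw [show (s + (x - 1)) / 2 = Real.sqrt (((s + (x - 1)) / 2) ^ 2) from
          (Real.sqrt_sq (by nlinarith)).symm]
        apply Real.sqrt_le_sqrt
        nlinarith [sq_nonneg (s - (x - 1)),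
          mul_nonneg (mul_nonneg (sq_nonneg (x - 1)) (by linarith : (0:ℝ) ≤ x))
            (by linarith : (0:ℝ) ≤ x + 2)]
      have h1 : f x ≤ 1 / ((s + (x - 1)) / 2) :=
        one_div_le_one_div_of_le (by linarith) hsq
      calc f x ≤ 1 / ((s + (x - 1)) / 2) := h1
        _ = 2 * (s + 1 * (x - 1))⁻¹ := by
            rw [one_mul, one_div, inv_div]; ring
    have hgII : IntervalIntegrable (fun x : ℝ => 2 * (s + 1 * (x - 1))⁻¹) volume 1 2 := by
      apply ContinuousOn.intervalIntegrable
      apply ContinuousOn.mul continuousOn_const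
      apply ContinuousOn.inv₀ (by fun_prop)
      intro x hx
      rw [Set.uIcc_of_le one_le_two] at hx
      nlinarith [hx.1]
    have hcmp : (∫ x in (1:ℝ)..2, f x) ≤ ∫ x in (1:ℝ)..2, 2 * (s + 1 * (x - 1))⁻¹ :=
      intervalIntegral.integral_mono_on one_le_two (hcontf.intervalIntegrable 1 2) hgII hpthigh
    have hval1 : (∫ x in (1:ℝ)..2, 2 * (s + 1 * (x - 1))⁻¹)
        = 2 * ((Real.log (s + 1) - Real.log s) / 1) := by
      rw [intervalIntegral.integral_const_mul, aux_log_integral s 1 hs one_pos]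
    have htail : (∫ u in Set.Ioi (2:ℝ), f u) ≤ 2/3 := by
      have := setIntegral_mono_on hint2 hgint measurableSet_Ioi hbound2
      have hvaltail : (∫ u in Set.Ioi (2:ℝ), (4/3 : ℝ) * u ^ (-2 : ℝ)) = 2/3 := by
        rw [integral_const_mul, integral_Ioi_rpow_of_lt (by norm_num) (by norm_num : (0:ℝ) < 2)]
        norm_num
      linarith [this, le_of_eq hvaltail]
    have hlog2 : Real.log (s + 1) ≤ Real.log 2 := by
      apply Real.log_le_log (by linarith); linarith
    have hlog2' : Real.log 2 < 0.6931471808 := Real.log_two_lt_d9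
    have key : (∫ u in Set.Ioi (1:ℝ), f u)
        ≤ 2 * (Real.log (s + 1) - Real.log s) + 2/3 := by
      rw [hsplit, hIoc_eq]
      have := hcmp.trans (le_of_eq hval1)
      linarith
    have hLs : Real.log (1 / δ) = -2 * Real.log s := hlogδ
    calc (∫ u in Set.Ioi (1:ℝ), f u) ≤ 2 * (Real.log (s + 1) - Real.log s) + 2/3 := key
      _ ≤ 4 * Real.log (1 / δ) := by
          have : -2 * Real.log s = Real.log (1/δ) := hLs.symm
          nlinarith [hL1, hlog2, hlog2']
end
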